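/- There exists an absolute constant K > 0 such that for every positive integer c and all integers x₁, x₂, one has |G(x₁, x₂; c)| ≤ K c^{-3/2}, where G(x₁, x₂; c) = c^{-3} ∑_{a=0}^{c-1} ∑_{b=0}^{c-1} S(a, b²; c) e((a x₁ + b x₂)/c). -/

import Mathlib

open Complex

/-- `e(x) = exp(2πix)`. -/
noncomputable def eAdd (x : ℝ) : ℂ := Complex.exp (2 * Real.pi * Complex.I * x)

/-- The Kloosterman sum `S(a, b; c) = ∑_{d mod c, (d,c)=1} e((ad + b d̄)/c)`,
where `d̄` is the inverse of `d` modulo `c` (computed in `ZMod c`). -/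
noncomputable def kloos (a b : ℤ) (c : ℕ) : ℂ :=
  ∑ d ∈ (Finset.range c).filter (fun d => Nat.gcd d c = 1),
    eAdd (((a * (d : ℤ) + b * ((((d : ZMod c)⁻¹).val : ℤ)) : ℤ) : ℝ) / c)

/-- The arithmetic part `G(x₁, x₂; c) = c^{-3} ∑_{a,b mod c} S(a, b²; c) e((a x₁ + b x₂)/c)`. -/
noncomputable def Garith (x₁ x₂ : ℤ) (c : ℕ) : ℂ :=
  ((c : ℂ) ^ 3)⁻¹ *
    ∑ a ∈ Finset.range c, ∑ b ∈ Finset.range c,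
      kloos (a : ℤ) ((b : ℤ) ^ 2) c * eAdd ((((a : ℤ) * x₁ + (b : ℤ) * x₂ : ℤ) : ℝ) / c)



noncomputable def psi (c : ℕ) (n : ℤ) : ℂ := eAdd ((n : ℝ) / c)

lemma psi_def (c : ℕ) (n : ℤ) :
    psi c n = Complex.exp (2 * Real.pi * Complex.I * (n / c)) := by
  simp [psi, eAdd]

lemma psi_add (c : ℕ) (m n : ℤ) : psi c (m + n) = psi c m * psi c n := by
  rw [psi_def, psi_def, psi_def, ← Complex.exp_add]
  ring_nf
  push_cast
  ring_nf

lemma psi_norm (c : ℕ) (n : ℤ) : ‖psi c n‖ = 1 := by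
  have : psi c n = Complex.exp ((((2 * Real.pi * n / c) : ℝ) : ℂ) * Complex.I) := by
    rw [psi_def]
    push_cast
    ring_nf
  rw [this, Complex.norm_exp_ofReal_mul_I]

lemma psi_pow (c : ℕ) (a : ℕ) (n : ℤ) : psi c (a * n) = psi c n ^ a := by
  rw [psi_def, psi_def, ← Complex.exp_nat_mul]
  ring_nf
  push_cast
  ring_nf

lemma psi_eq_one_of_dvd (c : ℕ) (hc : 0 < c) (n : ℤ) (h : (c : ℤ) ∣ n) : psi c n = 1 := by
  obtain ⟨k, rfl⟩ := h
  rw [psi_def]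
  have hc0 : (c : ℂ) ≠ 0 := Nat.cast_ne_zero.mpr hc.ne'
  have : (2 * Real.pi * Complex.I * ((c * k : ℤ) / c)) = k * (2 * Real.pi * Complex.I) := by
    push_cast
    field_simp
  rw [this, Complex.exp_int_mul_two_pi_mul_I]

lemma psi_congr (c : ℕ) (hc : 0 < c) {m n : ℤ} (h : m ≡ n [ZMOD c]) : psi c m = psi c n := by
  have hd : (c : ℤ) ∣ m - n := Int.ModEq.dvd h.symm
  obtain ⟨k, hk⟩ := hd
  have hm : m = n + c * k := by linarith
  rw [hm, psi_add, psi_eq_one_of_dvd c hc _ ⟨k, rfl⟩, mul_one]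

lemma psi_ne_one (c : ℕ) (hc : 0 < c) (n : ℤ) (h : ¬ (c : ℤ) ∣ n) : psi c n ≠ 1 := by
  rw [psi_def]
  intro hone
  rw [Complex.exp_eq_one_iff] at hone
  obtain ⟨k, hk⟩ := hone
  have h2 : (2 * Real.pi * Complex.I) ≠ 0 := by
    simp [Real.pi_ne_zero, Complex.I_ne_zero]
  have : ((n : ℂ) / c) = k :=
    mul_left_cancel₀ h2 (by rw [hk]; ring)
  apply h
  have hc0 : (c : ℂ) ≠ 0 := Nat.cast_ne_zero.mpr hc.ne'
  have : (n : ℂ) = k * c := by field_simp at this; linear_combination this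
  have : (n : ℤ) = k * c := by exact_mod_cast this
  exact ⟨k, by linarith⟩

lemma psi_orth (c : ℕ) (hc : 0 < c) (n : ℤ) :
    ∑ a ∈ Finset.range c, psi c (a * n) = if (c : ℤ) ∣ n then (c : ℂ) else 0 := by
  by_cases h : (c : ℤ) ∣ n
  · simp only [h, if_true]
    have : ∀ a ∈ Finset.range c, psi c (a * n) = 1 := fun a _ =>
      psi_eq_one_of_dvd c hc _ (Dvd.dvd.mul_left h _)
    rw [Finset.sum_congr rfl this]
    simp
  · simp only [h, if_false]
    have hne := psi_ne_one c hc n h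
    have hpow : ∀ a : ℕ, psi c ((a : ℤ) * n) = psi c n ^ a := fun a => psi_pow c a n
    calc ∑ a ∈ Finset.range c, psi c (a * n) = ∑ a ∈ Finset.range c, psi c n ^ a := by
          exact Finset.sum_congr rfl fun a _ => hpow a
      _ = (psi c n ^ c - 1) / (psi c n - 1) := geom_sum_eq hne c
      _ = 0 := by
          rw [← psi_pow, psi_eq_one_of_dvd c hc _ ⟨n, rfl⟩]
          simp

section Gauss

lemma psi_conj (c : ℕ) (n : ℤ) : (starRingEnd ℂ) (psi c n) = psi c (-n) := by
  have h1 : psi c n * psi c (-n) = 1 := by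
    rw [← psi_add]; simp [psi_def]
  have h2 : psi c n * (starRingEnd ℂ) (psi c n) = 1 := by
    rw [Complex.mul_conj]
    norm_cast
    rw [← Complex.sq_norm, psi_norm]
    norm_num
  have hne : psi c n ≠ 0 := by
    intro h0
    rw [h0, zero_mul] at h1
    exact one_ne_zero h1.symm
  exact mul_left_cancel₀ hne (h2.trans h1.symm)

lemma sum_zmod (c : ℕ) [NeZero c] (f : ℕ → ℂ) :
    ∑ x : ZMod c, f x.val = ∑ a ∈ Finset.range c, f a := by
  refine Finset.sum_bij' (fun x _ => x.val) (fun a _ => (a : ZMod c)) ?_ ?_ ?_ ?_ ?_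
  · intro x _; exact Finset.mem_range.mpr (ZMod.val_lt x)
  · intro a _; exact Finset.mem_univ _
  · intro x _; exact ZMod.natCast_rightInverse x
  · intro a ha; exact ZMod.val_cast_of_lt (Finset.mem_range.mp ha)
  · intro x _; rfl

lemma val_add_congr (c : ℕ) [NeZero c] (x y : ZMod c) :
    (((x + y).val : ℤ)) ≡ (x.val : ℤ) + (y.val : ℤ) [ZMOD c] := by
  rw [ZMod.val_add]
  push_cast
  exact Int.emod_emod_of_dvd _ dvd_rfl

lemma g_congr (c : ℕ) (hc : 0 < c) (m x t s : ℤ) (h : t ≡ s [ZMOD c]) :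
    psi c (t ^ 2 * m + t * x) = psi c (s ^ 2 * m + s * x) := by
  apply psi_congr c hc
  exact Int.ModEq.add (Int.ModEq.mul (by simpa [sq] using h.mul h) Int.ModEq.rfl)
    (h.mul Int.ModEq.rfl)

lemma card_two_torsion (c : ℕ) [NeZero c] (m : ℕ) (hm : Nat.Coprime m c) :
    (Finset.univ.filter (fun h : ZMod c => (c : ℤ) ∣ 2 * (h.val : ℤ) * m)).card ≤ 2 := by
  have hc : 0 < c := Nat.pos_of_ne_zero (NeZero.ne c)
  have hsub : (Finset.univ.filter (fun h : ZMod c => (c : ℤ) ∣ 2 * (h.val : ℤ) * m)) ⊆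
      {(0 : ZMod c), ((c / 2 : ℕ) : ZMod c)} := by
    intro h hh
    simp only [Finset.mem_filter] at hh
    have hdvd : c ∣ 2 * h.val * m := by exact_mod_cast hh.2
    have hdvd2 : c ∣ 2 * h.val := Nat.Coprime.dvd_of_dvd_mul_right hm.symm hdvd
    obtain ⟨k, hk⟩ := hdvd2
    have hlt : 2 * h.val < 2 * c := by
      have := ZMod.val_lt h; omega
    have hklt : k < 2 := by
      by_contra h2
      push_neg at h2
      have : c * 2 ≤ c * k := Nat.mul_le_mul_left c h2
      omega
    interval_cases k
    · have hv : h.val = 0 := by omega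
      simp only [Finset.mem_insert, Finset.mem_singleton]
      left; exact (ZMod.val_eq_zero h).mp hv
    · have hv : h.val = c / 2 := by omega
      have hcast : ((h.val : ℕ) : ZMod c) = h := ZMod.natCast_rightInverse h
      simp only [Finset.mem_insert, Finset.mem_singleton]
      right; rw [← hcast, hv]
  refine le_trans (Finset.card_le_card hsub) ?_
  refine le_trans (Finset.card_insert_le _ _) ?_
  simp

lemma gauss_key (c : ℕ) [NeZero c] (hc : 0 < c) (m : ℕ) (x : ℤ) :
    (∑ b ∈ Finset.range c, psi c ((b : ℤ) ^ 2 * m + b * x)) *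
      (starRingEnd ℂ) (∑ b ∈ Finset.range c, psi c ((b : ℤ) ^ 2 * m + b * x)) =
    ∑ h : ZMod c, (if (c : ℤ) ∣ 2 * (h.val : ℤ) * m then (c : ℂ) else 0) *
      psi c ((h.val : ℤ) ^ 2 * m + h.val * x) := by
  haveI : NeZero c := ⟨hc.ne'⟩
  rw [← sum_zmod c (fun a => psi c ((a : ℤ) ^ 2 * m + a * x))]
  rw [map_sum, Finset.sum_mul_sum]
  calc ∑ b : ZMod c, ∑ b' : ZMod c,
        psi c ((b.val : ℤ) ^ 2 * m + b.val * x) *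
          (starRingEnd ℂ) (psi c ((b'.val : ℤ) ^ 2 * m + b'.val * x))
      = ∑ b' : ZMod c, ∑ b : ZMod c,
        psi c (((b.val : ℤ) ^ 2 * m + b.val * x) - ((b'.val : ℤ) ^ 2 * m + b'.val * x)) := by
        rw [Finset.sum_comm]
        refine Finset.sum_congr rfl fun b' _ => Finset.sum_congr rfl fun b _ => ?_
        rw [psi_conj, ← psi_add, sub_eq_add_neg]
    _ = ∑ b' : ZMod c, ∑ h : ZMod c,
        psi c ((b'.val : ℤ) * (2 * h.val * m)) * psi c ((h.val : ℤ) ^ 2 * m + h.val * x) := by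
        refine Finset.sum_congr rfl fun b' _ => ?_
        refine (Fintype.sum_equiv (Equiv.addLeft b') _ _ fun h => ?_).symm
        show psi c ((b'.val : ℤ) * (2 * h.val * m)) * psi c ((h.val : ℤ) ^ 2 * m + h.val * x)
          = psi c ((((b' + h).val : ℤ)) ^ 2 * m + ((b' + h).val : ℤ) * x
              - ((b'.val : ℤ) ^ 2 * m + b'.val * x))
        conv_rhs => rw [sub_eq_add_neg, psi_add]
        rw [g_congr c hc m x _ _ (val_add_congr c b' h), ← psi_add, ← psi_add]
        congr 1
        ring
    _ = _ := by
        rw [Finset.sum_comm]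
        refine Finset.sum_congr rfl fun h _ => ?_
        rw [← Finset.sum_mul]
        congr 1
        rw [sum_zmod c (fun a => psi c ((a : ℤ) * (2 * h.val * m)))]
        exact psi_orth c hc _

lemma gauss_norm (c : ℕ) (hc : 0 < c) (m : ℕ) (hm : Nat.Coprime m c) (x : ℤ) :
    ‖∑ b ∈ Finset.range c, psi c ((b : ℤ) ^ 2 * m + b * x)‖ ≤
      Real.sqrt 2 * Real.sqrt c := by
  haveI : NeZero c := ⟨hc.ne'⟩
  set Q := ∑ b ∈ Finset.range c, psi c ((b : ℤ) ^ 2 * m + b * x) with hQ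
  have hsq : ‖Q‖ ^ 2 ≤ 2 * c := by
    have h1 : ‖Q‖ ^ 2 = ‖Q * (starRingEnd ℂ) Q‖ := by
      rw [norm_mul, RCLike.norm_conj, sq]
    rw [h1, gauss_key c hc m x]
    refine le_trans (norm_sum_le _ _) ?_
    have hterm : ∀ h : ZMod c,
        ‖(if (c : ℤ) ∣ 2 * (h.val : ℤ) * m then (c : ℂ) else 0) *
          psi c ((h.val : ℤ) ^ 2 * m + h.val * x)‖ =
        (if (c : ℤ) ∣ 2 * (h.val : ℤ) * m then (c : ℝ) else 0) := by
      intro h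
      rw [norm_mul, psi_norm, mul_one]
      split <;> simp
    rw [Finset.sum_congr rfl fun h _ => hterm h, ← Finset.sum_filter, Finset.sum_const,
      nsmul_eq_mul]
    have hcard := card_two_torsion c m hm
    have : ((Finset.univ.filter (fun h : ZMod c => (c : ℤ) ∣ 2 * (h.val : ℤ) * m)).card : ℝ)
        ≤ 2 := by exact_mod_cast hcard
    have hc' : (0:ℝ) ≤ (c:ℝ) := Nat.cast_nonneg c
    nlinarith
  have h2 : (0:ℝ) ≤ ‖Q‖ := norm_nonneg _
  have := Real.sqrt_le_sqrt hsq
  rw [Real.sqrt_sq h2, Real.sqrt_mul (by norm_num : (0:ℝ) ≤ 2)] at this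
  exact this

end Gauss

section Main

lemma inv_val_coprime (c : ℕ) [NeZero c] (d : ℕ) (hd : Nat.gcd d c = 1) :
    Nat.Coprime (((d : ZMod c)⁻¹).val) c := by
  have hu : IsUnit ((d : ℕ) : ZMod c) := (ZMod.isUnit_iff_coprime d c).mpr hd
  have hu' : IsUnit (((d : ℕ) : ZMod c)⁻¹) :=
    IsUnit.of_mul_eq_one _ (ZMod.inv_mul_of_unit _ hu)
  have hcast : ((((d : ℕ) : ZMod c)⁻¹).val : ZMod c) = ((d : ℕ) : ZMod c)⁻¹ :=
    ZMod.natCast_rightInverse _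
  rw [← ZMod.isUnit_iff_coprime, hcast]
  exact hu'

lemma kloos_eq (a b : ℤ) (c : ℕ) :
    kloos a b c = ∑ d ∈ (Finset.range c).filter (fun d => Nat.gcd d c = 1),
      psi c (a * (d : ℤ) + b * ((((d : ZMod c)⁻¹).val : ℤ))) := rfl

lemma Garith_eq (x₁ x₂ : ℤ) (c : ℕ) (hc : 0 < c) :
    Garith x₁ x₂ c = ((c : ℂ) ^ 3)⁻¹ *
      ∑ d ∈ (Finset.range c).filter (fun d => Nat.gcd d c = 1),
        (if (c : ℤ) ∣ (d : ℤ) + x₁ then (c : ℂ) else 0) *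
          ∑ b ∈ Finset.range c,
            psi c ((b : ℤ) ^ 2 * ((((d : ZMod c)⁻¹).val : ℕ) : ℤ) + b * x₂) := by
  rw [Garith]
  congr 1
  set D := (Finset.range c).filter (fun d => Nat.gcd d c = 1) with hD
  have lhs_eq : ∀ a b : ℕ,
      kloos (a : ℤ) ((b : ℤ) ^ 2) c * eAdd ((((a : ℤ) * x₁ + (b : ℤ) * x₂ : ℤ) : ℝ) / c)
      = ∑ d ∈ D, psi c ((a : ℤ) * ((d : ℤ) + x₁)) *
          psi c ((b : ℤ) ^ 2 * ((((d : ZMod c)⁻¹).val : ℕ) : ℤ) + b * x₂) := by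
    intro a b
    rw [kloos_eq, Finset.sum_mul]
    refine Finset.sum_congr rfl fun d _ => ?_
    have : eAdd ((((a : ℤ) * x₁ + (b : ℤ) * x₂ : ℤ) : ℝ) / c)
        = psi c ((a : ℤ) * x₁ + (b : ℤ) * x₂) := rfl
    rw [this, ← psi_add, ← psi_add]
    congr 1
    push_cast
    ring
  calc ∑ a ∈ Finset.range c, ∑ b ∈ Finset.range c,
        kloos (a : ℤ) ((b : ℤ) ^ 2) c * eAdd ((((a : ℤ) * x₁ + (b : ℤ) * x₂ : ℤ) : ℝ) / c)
      = ∑ a ∈ Finset.range c, ∑ b ∈ Finset.range c, ∑ d ∈ D,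
          psi c ((a : ℤ) * ((d : ℤ) + x₁)) *
            psi c ((b : ℤ) ^ 2 * ((((d : ZMod c)⁻¹).val : ℕ) : ℤ) + b * x₂) := by
        exact Finset.sum_congr rfl fun a _ => Finset.sum_congr rfl fun b _ => lhs_eq a b
    _ = ∑ d ∈ D, (∑ a ∈ Finset.range c, psi c ((a : ℤ) * ((d : ℤ) + x₁))) *
          ∑ b ∈ Finset.range c,
            psi c ((b : ℤ) ^ 2 * ((((d : ZMod c)⁻¹).val : ℕ) : ℤ) + b * x₂) := by
        rw [show (∑ a ∈ Finset.range c, ∑ b ∈ Finset.range c, ∑ d ∈ D,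
            psi c ((a : ℤ) * ((d : ℤ) + x₁)) *
              psi c ((b : ℤ) ^ 2 * ((((d : ZMod c)⁻¹).val : ℕ) : ℤ) + b * x₂))
            = ∑ d ∈ D, ∑ a ∈ Finset.range c, ∑ b ∈ Finset.range c,
            psi c ((a : ℤ) * ((d : ℤ) + x₁)) *
              psi c ((b : ℤ) ^ 2 * ((((d : ZMod c)⁻¹).val : ℕ) : ℤ) + b * x₂) from by
          rw [show (∑ a ∈ Finset.range c, ∑ b ∈ Finset.range c, ∑ d ∈ D,
              psi c ((a : ℤ) * ((d : ℤ) + x₁)) *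
                psi c ((b : ℤ) ^ 2 * ((((d : ZMod c)⁻¹).val : ℕ) : ℤ) + b * x₂))
              = ∑ a ∈ Finset.range c, ∑ d ∈ D, ∑ b ∈ Finset.range c,
              psi c ((a : ℤ) * ((d : ℤ) + x₁)) *
                psi c ((b : ℤ) ^ 2 * ((((d : ZMod c)⁻¹).val : ℕ) : ℤ) + b * x₂) from
            Finset.sum_congr rfl fun a _ => by rw [Finset.sum_comm]]
          rw [Finset.sum_comm]]
        exact Finset.sum_congr rfl fun d _ => (Finset.sum_mul_sum _ _ _ _).symm
    _ = _ := by
        refine Finset.sum_congr rfl fun d _ => ?_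
        rw [psi_orth c hc]

end Main

/-- Uniform bound for the arithmetic part: there is an absolute `K > 0` with
`|G(x₁, x₂; c)| ≤ K c^{-3/2}` for all positive integers `c` and all integers `x₁, x₂`. -/
theorem Garith_bound :
    ∃ K : ℝ, 0 < K ∧ ∀ c : ℕ, 0 < c → ∀ x₁ x₂ : ℤ,
      ‖Garith x₁ x₂ c‖ ≤ K * (c : ℝ) ^ (-(3 / 2 : ℝ)) := by
  refine ⟨Real.sqrt 2, Real.sqrt_pos.mpr two_pos, ?_⟩
  intro c hc x₁ x₂
  haveI : NeZero c := ⟨hc.ne'⟩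
  have hcp : (0:ℝ) < (c : ℝ) := by exact_mod_cast hc
  set D := (Finset.range c).filter (fun d => Nat.gcd d c = 1) with hD
  set M := Real.sqrt 2 * Real.sqrt c with hM
  have hM0 : 0 ≤ M := mul_nonneg (Real.sqrt_nonneg _) (Real.sqrt_nonneg _)
  rw [Garith_eq x₁ x₂ c hc, norm_mul]
  have hnorm_inv : ‖((c:ℂ)^3)⁻¹‖ = ((c:ℝ)^3)⁻¹ := by
    rw [norm_inv, norm_pow, Complex.norm_natCast]
  have hterm : ∀ d ∈ D,
      ‖(if (c:ℤ) ∣ (d:ℤ) + x₁ then (c:ℂ) else 0) *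
        ∑ b ∈ Finset.range c,
          psi c ((b:ℤ)^2 * ((((d : ZMod c)⁻¹).val : ℕ) : ℤ) + b * x₂)‖ ≤
      (if (c:ℤ) ∣ (d:ℤ) + x₁ then (c:ℝ) else 0) * M := by
    intro d hd
    have hgcd : Nat.gcd d c = 1 := (Finset.mem_filter.mp hd).2
    have hQ := gauss_norm c hc (((d : ZMod c)⁻¹).val) (inv_val_coprime c d hgcd) x₂
    rw [norm_mul]
    split
    · rw [Complex.norm_natCast]
      exact mul_le_mul_of_nonneg_left hQ hcp.le
    · simp
  have hsum : ‖∑ d ∈ D, (if (c:ℤ) ∣ (d:ℤ) + x₁ then (c:ℂ) else 0) *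
        ∑ b ∈ Finset.range c,
          psi c ((b:ℤ)^2 * ((((d : ZMod c)⁻¹).val : ℕ) : ℤ) + b * x₂)‖ ≤ (c:ℝ) * M := by
    refine le_trans (norm_sum_le _ _) (le_trans (Finset.sum_le_sum hterm) ?_)
    rw [← Finset.sum_mul]
    have hcard : (D.filter (fun d : ℕ => (c:ℤ) ∣ (d:ℤ) + x₁)).card ≤ 1 := by
      refine Finset.card_le_one.mpr fun d₁ h₁ d₂ h₂ => ?_
      simp only [Finset.mem_filter, hD, Finset.mem_range] at h₁ h₂
      obtain ⟨⟨hd₁, _⟩, hdvd₁⟩ := h₁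
      obtain ⟨⟨hd₂, _⟩, hdvd₂⟩ := h₂
      have hdiff : (c:ℤ) ∣ (d₁:ℤ) - d₂ := by
        have := Int.dvd_sub hdvd₁ hdvd₂
        simpa using this
      have habs : |(d₁:ℤ) - d₂| < (c:ℤ) := by
        rw [abs_lt]; constructor <;> [omega; omega]
      have := Int.eq_zero_of_abs_lt_dvd hdiff habs
      omega
    have hsumite : (∑ d ∈ D, if (c:ℤ) ∣ (d:ℤ) + x₁ then (c:ℝ) else 0)
        = (D.filter (fun d : ℕ => (c:ℤ) ∣ (d:ℤ) + x₁)).card * (c:ℝ) := by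
      rw [← Finset.sum_filter, Finset.sum_const, nsmul_eq_mul]
    rw [hsumite]
    have h1 : ((D.filter (fun d : ℕ => (c:ℤ) ∣ (d:ℤ) + x₁)).card : ℝ) ≤ 1 := by exact_mod_cast hcard
    have := mul_le_mul_of_nonneg_right (mul_le_mul_of_nonneg_right h1 hcp.le) hM0
    linarith
  calc ‖((c:ℂ)^3)⁻¹‖ * ‖∑ d ∈ D, (if (c:ℤ) ∣ (d:ℤ) + x₁ then (c:ℂ) else 0) *
        ∑ b ∈ Finset.range c,
          psi c ((b:ℤ)^2 * ((((d : ZMod c)⁻¹).val : ℕ) : ℤ) + b * x₂)‖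
      ≤ ((c:ℝ)^3)⁻¹ * ((c:ℝ) * M) := by
        rw [hnorm_inv]
        exact mul_le_mul_of_nonneg_left hsum (by positivity)
    _ = Real.sqrt 2 * (c:ℝ) ^ (-(3/2 : ℝ)) := by
        rw [hM]
        have e1 : (c:ℝ) ^ (-(3/2 : ℝ)) = ((c:ℝ) ^ (3:ℝ))⁻¹ * ((c:ℝ) ^ (1:ℝ) * (c:ℝ) ^ ((1:ℝ)/2)) := by
          rw [← Real.rpow_neg hcp.le, ← Real.rpow_add hcp, ← Real.rpow_add hcp]
          norm_num
        have e2 : (c:ℝ) ^ (3:ℝ) = (c:ℝ) ^ (3:ℕ) := by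
          rw [← Real.rpow_natCast (c:ℝ) 3]; norm_num
        have e3 : Real.sqrt c = (c:ℝ) ^ ((1:ℝ)/2) := Real.sqrt_eq_rpow _
        rw [e1, e2, Real.rpow_one, e3]
        ring
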